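/- Let γ, μ, τ > 0 and A, Q ∈ ℝ with Q = 0 and A > 0, and suppose A·τ·max(μ, γ) < γ. Then every λ ∈ ℂ satisfying the characteristic equation Δ(λ) = 0 has Re λ < 0. -/

import Mathlib

/-- The characteristic function `Δ(λ) = λ + γ - A - (Q - A) e^{-λτ} - μA ∫_{-τ}^0 e^{λs} ds`
of the linearization of the threshold delay equation at a steady state. -/
noncomputable def charFun (γ μ τ A Q : ℝ) (lam : ℂ) : ℂ :=
  lam + (γ : ℂ) - (A : ℂ) - ((Q : ℂ) - (A : ℂ)) * Complex.exp (-lam * (τ : ℂ)) -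
    (μ : ℂ) * (A : ℂ) * ∫ s in (-τ)..(0 : ℝ), Complex.exp (lam * (s : ℂ))

/-- If `Q = 0`, `A > 0` and `A τ max(μ, γ) < γ`, then every root of the
characteristic equation `Δ(λ) = 0` has negative real part. -/
theorem charFun_roots_neg_re_of_A_pos
    (γ μ τ A Q : ℝ) (hγ : 0 < γ) (hμ : 0 < μ) (hτ : 0 < τ)
    (hQ : Q = 0) (hA : 0 < A) (hcond : A * τ * max μ γ < γ) :
    ∀ lam : ℂ, charFun γ μ τ A Q lam = 0 → lam.re < 0 := by
  intro lam hlam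
  by_contra h
  push_neg at h
  set I : ℂ := ∫ s in (-τ)..(0 : ℝ), Complex.exp (lam * (s : ℂ)) with hIdef
  -- key integral identity
  have hid : lam * I = 1 - Complex.exp (-lam * (τ : ℂ)) := by
    rcases eq_or_ne lam 0 with h0 | h0
    · simp [hIdef, h0]
    · rw [hIdef, integral_exp_mul_complex h0]
      simp [mul_neg, mul_div_cancel₀ _ h0]
  -- rewrite the characteristic equation
  have hkey : lam + (γ : ℂ) = (A : ℂ) * (lam + (μ : ℂ)) * I := by
    have hl : lam + (γ : ℂ) - (A : ℂ) - ((0 : ℂ) - (A : ℂ)) * Complex.exp (-lam * (τ : ℂ)) -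
        (μ : ℂ) * (A : ℂ) * I = 0 := by
      have := hlam
      simp only [charFun, hQ, Complex.ofReal_zero] at this
      exact this
    linear_combination hl - (A : ℂ) * hid
  -- bound the integral
  have hInorm : ‖I‖ ≤ τ := by
    have hb : ∀ s ∈ Set.uIoc (-τ) (0 : ℝ), ‖Complex.exp (lam * (s : ℂ))‖ ≤ 1 := by
      intro s hs
      rw [Set.uIoc_of_le (by linarith : (-τ : ℝ) ≤ 0)] at hs
      have hs0 : s ≤ 0 := hs.2
      rw [Complex.norm_exp]
      have : (lam * (s : ℂ)).re = lam.re * s := by simp [Complex.mul_re]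
      rw [this]
      have : lam.re * s ≤ 0 := mul_nonpos_of_nonneg_of_nonpos h hs0
      exact Real.exp_le_one_iff.mpr this
    have := intervalIntegral.norm_integral_le_of_norm_le_const hb
    simpa [abs_of_pos hτ] using this
  -- norms
  set a : ℝ := ‖lam + (γ : ℂ)‖ with hadef
  set b : ℝ := ‖lam + (μ : ℂ)‖ with hbdef
  have ha_ge : γ ≤ a := by
    have := Complex.abs_re_le_norm (lam + (γ : ℂ))
    have hre : (lam + (γ : ℂ)).re = lam.re + γ := by simp
    rw [hre] at this
    have : lam.re + γ ≤ a := le_trans (le_abs_self _) this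
    linarith
  have ha_pos : 0 < a := lt_of_lt_of_le hγ ha_ge
  have hb_nonneg : 0 ≤ b := norm_nonneg _
  have h1 : a ≤ A * τ * b := by
    calc a = ‖(A : ℂ) * (lam + (μ : ℂ)) * I‖ := by rw [hadef, hkey]
    _ = A * b * ‖I‖ := by
        rw [norm_mul, norm_mul]
        simp [Complex.norm_real, abs_of_pos hA, hbdef]
    _ ≤ A * b * τ := by
        apply mul_le_mul_of_nonneg_left hInorm
        positivity
    _ = A * τ * b := by ring
  -- compare norms: γ b ≤ max μ γ * a
  set M : ℝ := max μ γ with hMdef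
  have hMγ : γ ≤ M := le_max_right _ _
  have hMμ : μ ≤ M := le_max_left _ _
  have h2 : γ * b ≤ M * a := by
    have hsq : (γ * b) ^ 2 ≤ (M * a) ^ 2 := by
      have hb2 : b ^ 2 = (lam.re + μ) ^ 2 + lam.im ^ 2 := by
        rw [hbdef, Complex.sq_norm]
        simp [Complex.normSq_apply]
        ring
      have ha2 : a ^ 2 = (lam.re + γ) ^ 2 + lam.im ^ 2 := by
        rw [hadef, Complex.sq_norm]
        simp [Complex.normSq_apply]
        ring
      have e1 : γ * (lam.re + μ) ≤ M * (lam.re + γ) := by nlinarith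
      have e1' : 0 ≤ γ * (lam.re + μ) := mul_nonneg hγ.le (by linarith)
      have e2 : (γ * (lam.re + μ)) ^ 2 ≤ (M * (lam.re + γ)) ^ 2 :=
        pow_le_pow_left₀ e1' e1 2
      have e3 : γ ^ 2 * lam.im ^ 2 ≤ M ^ 2 * lam.im ^ 2 := by
        have hγM2 : γ ^ 2 ≤ M ^ 2 := by nlinarith
        exact mul_le_mul_of_nonneg_right hγM2 (sq_nonneg _)
      have key : γ ^ 2 * ((lam.re + μ) ^ 2 + lam.im ^ 2) ≤
          M ^ 2 * ((lam.re + γ) ^ 2 + lam.im ^ 2) := by nlinarith [e2, e3]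
      calc (γ * b) ^ 2 = γ ^ 2 * b ^ 2 := by ring
      _ = γ ^ 2 * ((lam.re + μ) ^ 2 + lam.im ^ 2) := by rw [hb2]
      _ ≤ M ^ 2 * ((lam.re + γ) ^ 2 + lam.im ^ 2) := key
      _ = (M * a) ^ 2 := by rw [← ha2]; ring
    have h1' : 0 ≤ γ * b := mul_nonneg hγ.le hb_nonneg
    have h2' : 0 ≤ M * a := mul_nonneg (le_trans hγ.le hMγ) ha_pos.le
    nlinarith [hsq, h1', h2']
  -- final contradiction
  have : γ * a ≤ A * τ * M * a := by
    calc γ * a ≤ γ * (A * τ * b) := by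
          exact mul_le_mul_of_nonneg_left h1 hγ.le
    _ = A * τ * (γ * b) := by ring
    _ ≤ A * τ * (M * a) := by
          apply mul_le_mul_of_nonneg_left h2
          positivity
    _ = A * τ * M * a := by ring
  nlinarith [this, ha_pos, hcond]
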